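/- Controls with disjoint supports whose first piece returns to the origin are orthogonal for the cost form: let t0 ≤ s ≤ s' ≤ t1, let Δu be a control vanishing almost everywhere outside [t0,s] and satisfying E(s,Δu) = 0, and let Δv be a control vanishing almost everywhere outside [s',t1]. Then C(t1, Δu + Δv) = C(t1,Δu) + C(t1,Δv); i.e., the polarization of the quadratic cost C(t1,·) vanishes on the pair (Δu,Δv). (The orthogonality claim used in the proof of Lemma 4.3.) -/

import Mathlib

open MeasureTheory Set

noncomputable section

/-- A control: a measurable, essentially bounded map `ℝ → ℝ^k`. -/
def IsControl (k : ℕ) (u : ℝ → Fin k → ℝ) : Prop :=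
  Measurable u ∧ ∃ C : ℝ, ∀ᵐ t : ℝ, ‖u t‖ ≤ C

/-- The endpoint map `E_a(τ, Δu) = ∫_a^τ A(t) · Δu(t) dt`. -/
def epMap (k m : ℕ) (A : ℝ → Matrix (Fin m) (Fin k) ℝ) (a τ : ℝ)
    (u : ℝ → Fin k → ℝ) : Fin m → ℝ :=
  ∫ t in a..τ, (A t).mulVec (u t)

/-- The reachable set `R(a,τ)` of the characteristic linear control system. -/
def reach (k m : ℕ) (A : ℝ → Matrix (Fin m) (Fin k) ℝ) (a τ : ℝ) :
    Set (Fin m → ℝ) :=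
  { v | ∃ u, IsControl k u ∧ epMap k m A a τ u = v }

/-- The quadratic cost `C_a(τ, Δu) = ∫_a^τ ⟨Δu(t), W(t)·E_a(t,Δu)⟩ dt` of the
characteristic optimal control problem. -/
def cost (k m : ℕ) (A : ℝ → Matrix (Fin m) (Fin k) ℝ)
    (W : ℝ → Matrix (Fin k) (Fin m) ℝ) (a τ : ℝ) (u : ℝ → Fin k → ℝ) : ℝ :=
  ∫ t in a..τ, dotProduct (u t) ((W t).mulVec (epMap k m A a t u))

/-- The set of costs of controls steering the system from `0` at time `a`
to `v` at time `τ`. -/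
def costSet (k m : ℕ) (A : ℝ → Matrix (Fin m) (Fin k) ℝ)
    (W : ℝ → Matrix (Fin k) (Fin m) ℝ) (a τ : ℝ) (v : Fin m → ℝ) : Set ℝ :=
  { c | ∃ u, IsControl k u ∧ epMap k m A a τ u = v ∧ cost k m A W a τ u = c }

/- ### Auxiliary lemmas -/

lemma meas_mulVec {k m : ℕ} {A : ℝ → Matrix (Fin m) (Fin k) ℝ}
    (hA : ∀ i j, Measurable fun t => A t i j) {u : ℝ → Fin k → ℝ}
    (hu : Measurable u) : Measurable fun t => (A t).mulVec (u t) := by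
  apply measurable_pi_lambda
  intro i
  simp only [Matrix.mulVec, dotProduct]
  exact Finset.measurable_sum _ fun j _ => (hA i j).mul ((measurable_pi_apply j).comp hu)

/-- Pointwise bound on `A t * u t`. -/
lemma norm_mulVec_le {k m : ℕ} (M : Matrix (Fin m) (Fin k) ℝ) (x : Fin k → ℝ)
    {CA Cx : ℝ} (hx : ‖x‖ ≤ Cx) (hA : ∀ i j, |M i j| ≤ CA)
    (hCA : 0 ≤ CA) (hCx : 0 ≤ Cx) :
    ‖M.mulVec x‖ ≤ k * (CA * Cx) := by
  refine (pi_norm_le_iff_of_nonneg (by positivity)).2 fun i => ?_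
  rw [Matrix.mulVec, dotProduct, Real.norm_eq_abs]
  calc |∑ j, M i j * x j| ≤ ∑ j, |M i j * x j| := Finset.abs_sum_le_sum_abs _ _
    _ ≤ ∑ _j : Fin k, CA * Cx := by
        refine Finset.sum_le_sum fun j _ => ?_
        rw [abs_mul]
        have : |x j| ≤ Cx := le_trans (norm_le_pi_norm x j) hx
        exact mul_le_mul (hA i j) this (abs_nonneg _) hCA
    _ = k * (CA * Cx) := by simp [Finset.sum_const, mul_comm]

lemma intInt_mulVec {k m : ℕ} {t0 t1 : ℝ} {A : ℝ → Matrix (Fin m) (Fin k) ℝ}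
    (hAmeas : ∀ i j, Measurable fun t => A t i j)
    (hAbdd : ∃ C : ℝ, ∀ t ∈ Set.Icc t0 t1, ∀ i j, |A t i j| ≤ C)
    {u : ℝ → Fin k → ℝ} (hu : IsControl k u) {a b : ℝ}
    (ha : t0 ≤ a) (hab : a ≤ b) (hb : b ≤ t1) :
    IntervalIntegrable (fun t => (A t).mulVec (u t)) volume a b := by
  obtain ⟨CA, hCA⟩ := hAbdd
  obtain ⟨Cu, hCu⟩ := hu.2
  rw [intervalIntegrable_iff_integrableOn_Ioc_of_le hab]
  refine Integrable.mono'
    ((integrableOn_const_iff (C := (k : ℝ) * (max CA 0 * max Cu 0))).2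
      (Or.inr measure_Ioc_lt_top))
    (meas_mulVec hAmeas hu.1).aestronglyMeasurable ?_
  filter_upwards [ae_restrict_of_ae hCu, ae_restrict_mem measurableSet_Ioc] with t htu htm
  have htI : t ∈ Set.Icc t0 t1 := ⟨ha.trans htm.1.le, htm.2.trans hb⟩
  exact norm_mulVec_le _ _ (htu.trans (le_max_left _ _))
    (fun i j => (hCA t htI i j).trans (le_max_left _ _)) (le_max_right _ _) (le_max_right _ _)

lemma continuousOn_epMap {k m : ℕ} {t0 t1 : ℝ} {A : ℝ → Matrix (Fin m) (Fin k) ℝ}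
    (hAmeas : ∀ i j, Measurable fun t => A t i j)
    (hAbdd : ∃ C : ℝ, ∀ t ∈ Set.Icc t0 t1, ∀ i j, |A t i j| ≤ C)
    {u : ℝ → Fin k → ℝ} (hu : IsControl k u) (h01 : t0 ≤ t1) :
    ContinuousOn (fun τ => epMap k m A t0 τ u) (Set.Icc t0 t1) := by
  have hint : IntegrableOn (fun t => (A t).mulVec (u t)) (Set.Icc t0 t1) := by
    rw [integrableOn_Icc_iff_integrableOn_Ioc]
    have := intInt_mulVec hAmeas hAbdd hu le_rfl h01 le_rfl
    rwa [intervalIntegrable_iff_integrableOn_Ioc_of_le h01] at this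
  have := intervalIntegral.continuousOn_primitive (f := fun t => (A t).mulVec (u t))
    (a := t0) (b := t1) (μ := volume) hint
  refine this.congr fun x hx => ?_
  simp only [epMap]
  rw [intervalIntegral.integral_of_le hx.1]

/-- **Orthogonality claim used in the proof of Lemma 4.3.** Controls with
disjoint supports whose first piece returns to the origin are orthogonal for
the cost form: if `Δu` vanishes a.e. outside `[t0,s]` with `E(s,Δu) = 0` and
`Δv` vanishes a.e. outside `[s',t1]` with `s ≤ s'`, then
`C(t1,Δu+Δv) = C(t1,Δu) + C(t1,Δv)`. -/
theorem cost_orthogonal_disjoint_supports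
    (t0 t1 : ℝ) (ht : t0 < t1) (k m : ℕ)
    (A : ℝ → Matrix (Fin m) (Fin k) ℝ)
    (hAmeas : ∀ i j, Measurable fun t => A t i j)
    (hAbdd : ∃ C : ℝ, ∀ t ∈ Set.Icc t0 t1, ∀ i j, |A t i j| ≤ C)
    (W : ℝ → Matrix (Fin k) (Fin m) ℝ)
    (hWmeas : ∀ i j, Measurable fun t => W t i j)
    (hWbdd : ∃ C : ℝ, ∀ t ∈ Set.Icc t0 t1, ∀ i j, |W t i j| ≤ C)
    (s s' : ℝ) (hs0 : t0 ≤ s) (hss' : s ≤ s') (hs1 : s' ≤ t1)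
    (Δu : ℝ → Fin k → ℝ) (hΔu : IsControl k Δu)
    (hΔusupp : ∀ᵐ t : ℝ, t ∉ Set.Icc t0 s → Δu t = 0)
    (hΔuret : epMap k m A t0 s Δu = 0)
    (Δv : ℝ → Fin k → ℝ) (hΔv : IsControl k Δv)
    (hΔvsupp : ∀ᵐ t : ℝ, t ∉ Set.Icc s' t1 → Δv t = 0) :
    cost k m A W t0 t1 (Δu + Δv) =
      cost k m A W t0 t1 Δu + cost k m A W t0 t1 Δv := by
  have h01 : t0 ≤ t1 := ht.le
  -- E(τ, Δv) = 0 for τ ≤ s'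
  have hEv0 : ∀ τ ∈ Set.Icc t0 s', epMap k m A t0 τ Δv = 0 := by
    intro τ hτ
    have hne : ∀ᵐ t : ℝ, t ≠ s' := by
      rw [ae_iff]
      simp only [not_not, Set.setOf_eq_eq_singleton]
      exact measure_singleton s'
    rw [epMap, ← intervalIntegral.integral_zero (a := t0) (b := τ) (E := Fin m → ℝ)]
    apply intervalIntegral.integral_congr_ae
    filter_upwards [hΔvsupp, hne] with t h1 h2 h3
    rw [Set.uIoc_of_le hτ.1] at h3
    have hts : t < s' := lt_of_le_of_ne (h3.2.trans hτ.2) h2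
    rw [h1 (fun hc => absurd hc.1 (not_le.2 hts))]
    simp [Matrix.mulVec_zero]
  -- E(τ, Δu) = 0 for τ ≥ s
  have hEu0 : ∀ τ ∈ Set.Icc s t1, epMap k m A t0 τ Δu = 0 := by
    intro τ hτ
    have h1 : IntervalIntegrable (fun t => (A t).mulVec (Δu t)) volume t0 s :=
      intInt_mulVec hAmeas hAbdd hΔu le_rfl hs0 (hss'.trans hs1)
    have h2 : IntervalIntegrable (fun t => (A t).mulVec (Δu t)) volume s τ :=
      intInt_mulVec hAmeas hAbdd hΔu hs0 hτ.1 hτ.2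
    have hsplit := intervalIntegral.integral_add_adjacent_intervals h1 h2
    have hzero : (∫ t in s..τ, (A t).mulVec (Δu t)) = 0 := by
      rw [← intervalIntegral.integral_zero (a := s) (b := τ) (E := Fin m → ℝ)]
      apply intervalIntegral.integral_congr_ae
      filter_upwards [hΔusupp] with t h1 h3
      rw [Set.uIoc_of_le hτ.1] at h3
      have hts : s < t := h3.1
      rw [h1 (fun hc => absurd hc.2 (not_le.2 hts))]
      simp [Matrix.mulVec_zero]
    have : epMap k m A t0 τ Δu = epMap k m A t0 s Δu + ∫ t in s..τ, (A t).mulVec (Δu t) := by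
      rw [epMap, epMap, hsplit]
    rw [this, hΔuret, hzero, add_zero]
  -- continuity and boundedness of partial endpoint maps
  have hcontU := continuousOn_epMap hAmeas hAbdd hΔu h01
  have hcontV := continuousOn_epMap hAmeas hAbdd hΔv h01
  obtain ⟨MU, hMU⟩ := (isCompact_Icc.exists_bound_of_continuousOn hcontU)
  obtain ⟨MV, hMV⟩ := (isCompact_Icc.exists_bound_of_continuousOn hcontV)
  -- the cost integrand of a control w w.r.t. an endpoint curve E
  -- integrability of cost integrands
  obtain ⟨CW, hCW⟩ := hWbdd
  have key : ∀ (w : ℝ → Fin k → ℝ), IsControl k w → ∀ (z : ℝ → Fin k → ℝ), IsControl k z →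
      IntervalIntegrable
        (fun t => dotProduct (w t) ((W t).mulVec (epMap k m A t0 t z))) volume t0 t1 := by
    intro w hw z hz
    have hcontZ := continuousOn_epMap hAmeas hAbdd hz h01
    obtain ⟨MZ, hMZ⟩ := (isCompact_Icc.exists_bound_of_continuousOn hcontZ)
    obtain ⟨Cw, hCw⟩ := hw.2
    rw [intervalIntegrable_iff_integrableOn_Ioc_of_le h01]
    have hmeasE : ∀ i : Fin m, AEStronglyMeasurable (fun t => epMap k m A t0 t z i)
        (volume.restrict (Set.Ioc t0 t1)) := fun i =>
      (((continuous_apply i).comp_continuousOn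
        (hcontZ.mono Set.Ioc_subset_Icc_self)).aestronglyMeasurable measurableSet_Ioc)
    have hmeas : AEStronglyMeasurable
        (fun t => dotProduct (w t) ((W t).mulVec (epMap k m A t0 t z)))
        (volume.restrict (Set.Ioc t0 t1)) := by
      simp only [dotProduct, Matrix.mulVec]
      apply Finset.aestronglyMeasurable_fun_sum
      intro j _
      refine (((measurable_pi_apply j).comp hw.1).aestronglyMeasurable).mul ?_
      apply Finset.aestronglyMeasurable_fun_sum
      intro i _
      exact ((hWmeas j i).aestronglyMeasurable).mul (hmeasE i)
    refine Integrable.mono'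
      ((integrableOn_const_iff
        (C := (k : ℝ) * (max Cw 0 * ((m : ℝ) * (max CW 0 * max MZ 0))))).2
        (Or.inr measure_Ioc_lt_top))
      hmeas ?_
    filter_upwards [ae_restrict_of_ae hCw, ae_restrict_mem measurableSet_Ioc] with t htw htm
    have htI : t ∈ Set.Icc t0 t1 := ⟨htm.1.le, htm.2⟩
    have h1 : ‖(W t).mulVec (epMap k m A t0 t z)‖ ≤ (m : ℝ) * (max CW 0 * max MZ 0) :=
      norm_mulVec_le _ _ ((hMZ t htI).trans (le_max_left _ _))
        (fun i j => (hCW t htI i j).trans (le_max_left _ _)) (le_max_right _ _) (le_max_right _ _)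
    calc ‖dotProduct (w t) ((W t).mulVec (epMap k m A t0 t z))‖
        ≤ ∑ j, ‖w t j * ((W t).mulVec (epMap k m A t0 t z)) j‖ := by
          rw [dotProduct, Real.norm_eq_abs]
          exact (Finset.abs_sum_le_sum_abs _ _)
      _ ≤ ∑ _j : Fin k, max Cw 0 * ((m : ℝ) * (max CW 0 * max MZ 0)) := by
          refine Finset.sum_le_sum fun j _ => ?_
          rw [Real.norm_eq_abs, abs_mul]
          have h2 := norm_le_pi_norm ((W t).mulVec (epMap k m A t0 t z)) j
          rw [Real.norm_eq_abs] at h2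
          have h3 := norm_le_pi_norm (w t) j
          rw [Real.norm_eq_abs] at h3
          exact mul_le_mul (le_trans (le_trans h3 htw) (le_max_left _ _))
            (h2.trans h1) (abs_nonneg _) (le_max_right _ _)
      _ = (k : ℝ) * (max Cw 0 * ((m : ℝ) * (max CW 0 * max MZ 0))) := by
          simp [Finset.sum_const, mul_comm]
  -- linearity of endpoint map
  have hEadd : ∀ τ ∈ Set.Icc t0 t1,
      epMap k m A t0 τ (Δu + Δv) = epMap k m A t0 τ Δu + epMap k m A t0 τ Δv := by
    intro τ hτ
    have h1 : IntervalIntegrable (fun t => (A t).mulVec (Δu t)) volume t0 τ :=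
      intInt_mulVec hAmeas hAbdd hΔu le_rfl hτ.1 hτ.2
    have h2 : IntervalIntegrable (fun t => (A t).mulVec (Δv t)) volume t0 τ :=
      intInt_mulVec hAmeas hAbdd hΔv le_rfl hτ.1 hτ.2
    rw [epMap, epMap, epMap, ← intervalIntegral.integral_add h1 h2]
    apply intervalIntegral.integral_congr
    intro t _
    simp [Matrix.mulVec_add]
  have hUV : IsControl k (Δu + Δv) := by
    refine ⟨hΔu.1.add hΔv.1, ?_⟩
    obtain ⟨Cu, hCu⟩ := hΔu.2
    obtain ⟨Cv, hCv⟩ := hΔv.2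
    refine ⟨Cu + Cv, ?_⟩
    filter_upwards [hCu, hCv] with t h1 h2
    calc ‖(Δu + Δv) t‖ = ‖Δu t + Δv t‖ := rfl
      _ ≤ ‖Δu t‖ + ‖Δv t‖ := norm_add_le _ _
      _ ≤ Cu + Cv := add_le_add h1 h2
  -- the four pieces
  have huu := key Δu hΔu Δu hΔu
  have huv := key Δu hΔu Δv hΔv
  have hvu := key Δv hΔv Δu hΔu
  have hvv := key Δv hΔv Δv hΔv
  -- main computation
  have hmain : cost k m A W t0 t1 (Δu + Δv) =
      ∫ t in t0..t1,
        (dotProduct (Δu t) ((W t).mulVec (epMap k m A t0 t Δu)) +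
         dotProduct (Δv t) ((W t).mulVec (epMap k m A t0 t Δv))) := by
    rw [cost]
    apply intervalIntegral.integral_congr_ae
    filter_upwards [hΔusupp, hΔvsupp] with t h1 h2 h3
    have htI : t ∈ Set.Ioc t0 t1 := by
      rwa [Set.uIoc_of_le h01] at h3
    have htIcc : t ∈ Set.Icc t0 t1 := ⟨htI.1.le, htI.2⟩
    rw [hEadd t htIcc]
    simp only [Pi.add_apply, Matrix.mulVec_add, add_dotProduct, dotProduct_add]
    -- cross terms vanish:
    have hcross1 : dotProduct (Δu t) ((W t).mulVec (epMap k m A t0 t Δv)) = 0 := by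
      by_cases hc : t ∈ Set.Icc t0 s
      · rw [hEv0 t ⟨hc.1, hc.2.trans hss'⟩]
        simp [Matrix.mulVec_zero]
      · rw [h1 hc]; simp [zero_dotProduct]
    have hcross2 : dotProduct (Δv t) ((W t).mulVec (epMap k m A t0 t Δu)) = 0 := by
      by_cases hc : t ∈ Set.Icc s' t1
      · rw [hEu0 t ⟨hss'.trans hc.1, hc.2⟩]
        simp [Matrix.mulVec_zero]
      · rw [h2 hc]; simp [zero_dotProduct]
    rw [hcross1, hcross2]
    ring
  rw [hmain, intervalIntegral.integral_add huu hvv]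
  rfl
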